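/- For all nonzero integers m and all positive integers n, the sum over k from 1 to n of m^k * ((m-256)k^3 - 128k^2 + 16k + 8) / ((2k+1)(4k+1) * k^3 * C(2k,k)^2 * C(4k,2k)) equals m^{n+1} / ((2n+1)(4n+1) * C(2n,n)^2 * C(4n,2n)) - m. -/
import Mathlib

lemma step_9 (m : ℚ) (p : ℕ) :
    ((m : ℚ) ^ (p+1) * (((m : ℚ) - 256) * (p+1:ℚ) ^ 3 - 128 * (p+1:ℚ) ^ 2 + 16 * (p+1:ℚ) + 8)) /
        ((2 * ((p+1) : ℚ) + 1) * (4 * ((p+1) : ℚ) + 1) * ((p+1) : ℚ) ^ 3 *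
          ((2 * (p+1)).choose (p+1) : ℚ) ^ 2 * ((4 * (p+1)).choose (2 * (p+1)) : ℚ))
      = (m : ℚ) ^ (p + 2) /
          ((2 * ((p+1) : ℚ) + 1) * (4 * ((p+1) : ℚ) + 1) * ((2 * (p+1)).choose (p+1) : ℚ) ^ 2 *
            ((4 * (p+1)).choose (2 * (p+1)) : ℚ))
        - (m : ℚ) ^ (p + 1) /
          ((2 * (p : ℚ) + 1) * (4 * (p : ℚ) + 1) * ((2 * p).choose p : ℚ) ^ 2 *
            ((4 * p).choose (2 * p) : ℚ)) := by
  set x : ℚ := (p : ℚ) with hx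
  have hx0 : 0 ≤ x := by positivity
  set a : ℚ := ((2 * p).choose p : ℚ) with ha
  set b : ℚ := ((2 * (p+1)).choose (p+1) : ℚ) with hb
  set c : ℚ := ((4 * p).choose (2 * p) : ℚ) with hc
  set d : ℚ := ((4 * (p+1)).choose (2 * (p+1)) : ℚ) with hd
  set e : ℚ := ((2*(2*p+1)).choose (2*p+1) : ℚ) with he
  have ha0 : 0 < a := by rw [ha]; exact_mod_cast Nat.choose_pos (by omega)
  have hb0 : 0 < b := by rw [hb]; exact_mod_cast Nat.choose_pos (by omega)
  have hc0 : 0 < c := by rw [hc]; exact_mod_cast Nat.choose_pos (by omega)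
  have hd0 : 0 < d := by rw [hd]; exact_mod_cast Nat.choose_pos (by omega)
  have h1 : (x + 1) * b = 2 * (2*x + 1) * a := by
    have h' : ((p+1) * Nat.centralBinom (p+1) : ℚ) = ((2*(2*p+1)*Nat.centralBinom p : ℕ) : ℚ) := by
      exact_mod_cast congrArg (Nat.cast : ℕ → ℚ) (Nat.succ_mul_centralBinom_succ p)
    simp only [Nat.centralBinom] at h'
    push_cast at h'
    rw [ha, hb, hx]; push_cast; linarith [h']
  have h2 : (2*x + 1) * e = 2 * (4*x + 1) * c := by
    have h' : ((2*p+1) * Nat.centralBinom (2*p+1) : ℚ) = ((2*(2*(2*p)+1)*Nat.centralBinom (2*p) : ℕ) : ℚ) := by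
      exact_mod_cast congrArg (Nat.cast : ℕ → ℚ) (Nat.succ_mul_centralBinom_succ (2*p))
    simp only [Nat.centralBinom] at h'
    have h4 : (2*(2*p)).choose (2*p) = (4*p).choose (2*p) := by
      congr 1; ring
    rw [h4] at h'
    push_cast at h'
    rw [hc, he, hx]; push_cast; linarith [h']
  have h3 : (2*x + 2) * d = 2 * (4*x + 3) * e := by
    have h' : ((2*p+1+1) * Nat.centralBinom (2*p+1+1) : ℚ) = ((2*(2*(2*p+1)+1)*Nat.centralBinom (2*p+1) : ℕ) : ℚ) := by
      exact_mod_cast congrArg (Nat.cast : ℕ → ℚ) (Nat.succ_mul_centralBinom_succ (2*p+1))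
    simp only [Nat.centralBinom] at h'
    have h4 : (2*(2*p+1+1)).choose (2*p+1+1) = (4*(p+1)).choose (2*(p+1)) := by
      congr 1 <;> ring
    rw [h4] at h'
    push_cast at h'
    rw [hd, he, hx]; push_cast; linarith [h']
  have hbb : (x + 1) ^ 2 * b ^ 2 = 4 * (2*x + 1) ^ 2 * a ^ 2 := by
    linear_combination ((x+1)*b + 2*(2*x+1)*a) * h1
  have key : (x+1)^3 * (b^2 * d) = 8*(2*x+1)*(4*x+3)*(4*x+1)*(a^2*c) := by
    linear_combination ((x+1)*d)*hbb + (2*(2*x+1)^2*a^2)*h3 + (4*(2*x+1)*(4*x+3)*a^2)*h2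
  have e1 : (2 * (x+1) + 1) * (4 * (x+1) + 1) * (x+1) ^ 3 * b ^ 2 * d ≠ 0 := by positivity
  have e2 : (2 * (x+1) + 1) * (4 * (x+1) + 1) * b ^ 2 * d ≠ 0 := by positivity
  have e3 : (2 * x + 1) * (4 * x + 1) * a ^ 2 * c ≠ 0 := by positivity
  push_cast
  rw [div_sub_div _ _ e2 e3, div_eq_div_iff e1 (mul_ne_zero e2 e3)]
  linear_combination (m^(p+1) * (2*(x+1)+1)^2 * (4*(x+1)+1)^2 * b^2 * d) * key

theorem stmt_9 (m : ℤ) (hm : m ≠ 0) (n : ℕ) (hn : 1 ≤ n) :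
    ∑ k ∈ Finset.Icc 1 n,
      ((m : ℚ) ^ k * (((m : ℚ) - 256) * k ^ 3 - 128 * k ^ 2 + 16 * k + 8)) /
        ((2 * (k : ℚ) + 1) * (4 * (k : ℚ) + 1) * (k : ℚ) ^ 3 *
          ((2 * k).choose k : ℚ) ^ 2 * ((4 * k).choose (2 * k) : ℚ))
      = (m : ℚ) ^ (n + 1) /
          ((2 * (n : ℚ) + 1) * (4 * (n : ℚ) + 1) * ((2 * n).choose n : ℚ) ^ 2 *
            ((4 * n).choose (2 * n) : ℚ)) - (m : ℚ) := by
  induction n, hn using Nat.le_induction with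
  | base =>
      simp only [Finset.Icc_self, Finset.sum_singleton]
      norm_num
      ring_nf
      norm_num [Nat.choose]
      ring
  | succ p hp ih =>
      rw [Finset.sum_Icc_succ_top (by omega : 1 ≤ p + 1), ih]
      have := step_9 (m : ℚ) p
      push_cast at this ⊢
      linarith [this]
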